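/- In the setting of the previous statement, define distances z_1 = d⃗(x_0, y_0), and for j ≥ 1, w_j = d⃗(x_{j-1} − r, x_j) and z_{j+1} = d⃗(y_{j-1} − r, y_j). Then for every i ≥ 0, x_0 ∈ f_r^i(X) if and only if Σ_{j=1}^i w_j ≤ Σ_{j=1}^i z_j. -/

import Mathlib

noncomputable section

instance : Fact ((0:ℝ) < 1) := ⟨zero_lt_one⟩

/-- Clockwise distance on the circle `S¹ = ℝ/ℤ`: the representative of `y - x` in `[0,1)`. -/
noncomputable def cdist (x y : AddCircle (1:ℝ)) : ℝ :=
  ((AddCircle.equivIco 1 0) (y - x)).1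

/-- `f` is the cyclic dynamical system map `f_r` on the finite set `X`. -/
def IsCyclicMap (X : Finset (AddCircle (1:ℝ))) (r : ℝ)
    (f : AddCircle (1:ℝ) → AddCircle (1:ℝ)) : Prop :=
  ∀ x ∈ X, f x ∈ X ∧ cdist x (f x) < r ∧
    ∀ y ∈ X, cdist x y < r → cdist x y ≤ cdist x (f x)

/-- `b` is the nearest point of `X` clockwise strictly after `a`. -/
def NearestCWAfter (X : Finset (AddCircle (1:ℝ))) (a b : AddCircle (1:ℝ)) : Prop :=
  b ∈ X ∧ 0 < cdist a b ∧ ∀ z ∈ X, 0 < cdist a z → cdist a b ≤ cdist a z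

/-! ### Auxiliary API for `cdist` -/

local notation "S1" => AddCircle (1:ℝ)

lemma ccoe_add (s t : ℝ) : ((s + t : ℝ) : S1) = (s : S1) + (t : S1) := by
  exact AddCircle.coe_add (p := (1:ℝ)) s t

lemma ccoe_sub (s t : ℝ) : ((s - t : ℝ) : S1) = (s : S1) - (t : S1) := by
  exact AddCircle.coe_sub (p := (1:ℝ)) s t

lemma ccoe_one : ((1 : ℝ) : S1) = 0 := AddCircle.coe_period (p := (1:ℝ)) ..

lemma ccoe_zero : ((0 : ℝ) : S1) = 0 := rfl

lemma cdist_mem (x y : S1) : cdist x y ∈ Set.Ico (0:ℝ) 1 := by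
  have h := ((AddCircle.equivIco 1 0) (y - x)).2
  simpa [cdist] using h

lemma cdist_nonneg (x y : S1) : 0 ≤ cdist x y := (cdist_mem x y).1

lemma cdist_lt_one (x y : S1) : cdist x y < 1 := (cdist_mem x y).2

lemma coe_cdist (x y : S1) : ((cdist x y : ℝ) : S1) = y - x :=
  (AddCircle.equivIco 1 0).symm_apply_apply (y - x)

lemma cdist_shift (x y : S1) : y = x + ((cdist x y : ℝ) : S1) := by
  rw [coe_cdist]; abel

lemma cdist_eq' {x y : S1} {t : ℝ} (h : y - x = ((t : ℝ) : S1)) (h0 : 0 ≤ t) (h1 : t < 1) :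
    cdist x y = t := by
  have ht : t ∈ Set.Ico (0:ℝ) (0 + 1) := by constructor <;> simpa
  have : (AddCircle.equivIco 1 0) (y - x) = ⟨t, ht⟩ := by
    rw [h]
    exact (AddCircle.equivIco 1 0).apply_symm_apply ⟨t, ht⟩
  simpa [cdist] using congrArg Subtype.val this

lemma cdist_self (x : S1) : cdist x x = 0 :=
  cdist_eq' (by simp) le_rfl one_pos

lemma eq_of_cdist_eq_zero {x y : S1} (h : cdist x y = 0) : x = y := by
  have hs := cdist_shift x y
  rw [h] at hs
  simpa using hs.symm

lemma nearest_unique {X : Finset S1} {a b b' : S1}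
    (h : NearestCWAfter X a b) (h' : NearestCWAfter X a b') : b = b' := by
  have h1 := h.2.2 b' h'.1 h'.2.1
  have h2 := h'.2.2 b h.1 h.2.1
  have he : cdist a b = cdist a b' := le_antisymm h1 h2
  rw [cdist_shift a b, cdist_shift a b', he]

/-! ### Core geometric step lemmas -/

section core

variable {X : Finset S1} {r : ℝ} {f : S1 → S1} {u v u' v' z : S1} {D : ℝ}

/-- C3: a point strictly after `a = u - r` and (implicitly) not too far maps forward to
something closer to `u` than its distance from `a`. -/
lemma forward_arc (hr1 : r ≤ 1) (hf : IsCyclicMap X r f) (hu : u ∈ X) (hz : z ∈ X)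
    (hσ : 0 < cdist (u - ((r:ℝ) : S1)) z) :
    cdist u (f z) < cdist (u - ((r:ℝ) : S1)) z := by
  set a : S1 := u - ((r:ℝ) : S1) with ha
  set σ : ℝ := cdist a z with hσdef
  have hσ1 : σ < 1 := cdist_lt_one a z
  obtain ⟨hfzX, hφr, hmax⟩ := hf z hz
  set φ : ℝ := cdist z (f z) with hφdef
  have hφ0 : 0 ≤ φ := cdist_nonneg z (f z)
  have hza : z = a + ((σ : ℝ) : S1) := cdist_shift a z
  have hfz : f z = z + ((φ : ℝ) : S1) := cdist_shift z (f z)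
  rcases le_or_gt σ r with hc | hc
  · -- z between a and u
    have htu : cdist z u = r - σ := by
      refine cdist_eq' ?_ (by linarith) (by linarith)
      rw [hza, ha]; simp only [ccoe_add, ccoe_sub, ccoe_one]; abel
    have hmax' : r - σ ≤ φ := by
      have := hmax u hu (by rw [htu]; linarith)
      rw [htu] at this; exact this
    have : cdist u (f z) = φ - (r - σ) := by
      refine cdist_eq' ?_ (by linarith) (by linarith)
      rw [hfz, hza, ha]; simp only [ccoe_add, ccoe_sub, ccoe_one]; abel
    rw [this]; linarith
  · -- z strictly after u
    have : cdist u (f z) = σ - r + φ := by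
      refine cdist_eq' ?_ (by linarith) (by linarith)
      rw [hfz, hza, ha]; simp only [ccoe_add, ccoe_sub, ccoe_one]; abel
    rw [this]; linarith

/-- C1: a point strictly beyond `b` maps forward outside the arc `[u, u + D)`. -/
lemma beyond_arc (hr0 : 0 < r) (hr1 : r ≤ 1) (hf : IsCyclicMap X r f) (hu : u ∈ X) (hv : v ∈ X)
    (hD0 : 0 ≤ D) (hD1 : D ≤ 1) (hvu : v = u + ((D:ℝ) : S1)) (hz : z ∈ X)
    (hσ : D < cdist (u - ((r:ℝ) : S1)) z) :
    D ≤ cdist u (f z) := by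
  set a : S1 := u - ((r:ℝ) : S1) with ha
  set σ : ℝ := cdist a z with hσdef
  have hσ1 : σ < 1 := cdist_lt_one a z
  obtain ⟨hfzX, hφr, hmax⟩ := hf z hz
  set φ : ℝ := cdist z (f z) with hφdef
  have hφ0 : 0 ≤ φ := cdist_nonneg z (f z)
  have hza : z = a + ((σ : ℝ) : S1) := cdist_shift a z
  have hfz : f z = z + ((φ : ℝ) : S1) := cdist_shift z (f z)
  rcases le_or_gt (D + r) σ with hc | hc
  · -- z at or beyond v; image directly lands at distance ≥ D
    have : cdist u (f z) = σ + φ - r := by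
      refine cdist_eq' ?_ (by linarith) (by linarith)
      rw [hfz, hza, ha]; simp only [ccoe_add, ccoe_sub, ccoe_one]; abel
    rw [this]; linarith
  · -- v is within reach of z, forcing φ to be large
    have hzv : cdist z v = D + r - σ := by
      refine cdist_eq' ?_ (by linarith) (by linarith)
      rw [hvu, hza, ha]; simp only [ccoe_add, ccoe_sub, ccoe_one]; abel
    have hmax' : D + r - σ ≤ φ := by
      have := hmax v hv (by rw [hzv]; linarith)
      rw [hzv] at this; exact this
    have : cdist u (f z) = σ + φ - r := by
      refine cdist_eq' ?_ (by linarith) (by linarith)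
      rw [hfz, hza, ha]; simp only [ccoe_add, ccoe_sub, ccoe_one]; abel
    rw [this]; linarith

/-- C2: the point `a = u - r` itself (if in `X`, and `D < 1`) maps forward outside the arc. -/
lemma at_a_arc (hr0 : 0 < r) (hr1 : r ≤ 1) (hf : IsCyclicMap X r f) (hu : u ∈ X) (hv : v ∈ X)
    (hD0 : 0 ≤ D) (hD1 : D < 1) (hvu : v = u + ((D:ℝ) : S1)) (hz : z ∈ X)
    (hσ : cdist (u - ((r:ℝ) : S1)) z = 0) :
    D ≤ cdist u (f z) := by
  set a : S1 := u - ((r:ℝ) : S1) with ha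
  have hza : z = a := (eq_of_cdist_eq_zero hσ).symm
  obtain ⟨hfzX, hφr, hmax⟩ := hf z hz
  set φ : ℝ := cdist z (f z) with hφdef
  have hφ0 : 0 ≤ φ := cdist_nonneg z (f z)
  have hfz : f z = z + ((φ : ℝ) : S1) := cdist_shift z (f z)
  have hψ : cdist u (f z) = φ + 1 - r := by
    refine cdist_eq' ?_ (by linarith) (by linarith)
    rw [hfz, hza, ha]; simp only [ccoe_add, ccoe_sub, ccoe_one]; abel
  rcases le_or_gt (D + r) 1 with hc | hc
  · rw [hψ]; linarith
  · have hzv : cdist z v = D + r - 1 := by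
      refine cdist_eq' ?_ (by linarith) (by linarith)
      rw [hvu, hza, ha]; simp only [ccoe_add, ccoe_sub, ccoe_one]; abel
    have hmax' : D + r - 1 ≤ φ := by
      have := hmax v hv (by rw [hzv]; linarith)
      rw [hzv] at this; exact this
    rw [hψ]; linarith

end core

section step

variable {X : Finset S1} {r : ℝ} {f : S1 → S1} {u v u' v' : S1} {D : ℝ}

/-- The alive step: if the nearest point `u'` after `a = u - r` is within the translated
arc, the preimage arc `[u, u+D)` pulls back to the arc `[u', u' + D')`. -/
lemma step_alive (hr0 : 0 < r) (hr1 : r ≤ 1) (hf : IsCyclicMap X r f)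
    (hu : u ∈ X) (hv : v ∈ X) (hD0 : 0 < D) (hD1 : D ≤ 1)
    (hvu : v = u + ((D:ℝ) : S1))
    (hu' : NearestCWAfter X (u - ((r:ℝ) : S1)) u')
    (hv' : NearestCWAfter X (v - ((r:ℝ) : S1)) v')
    (hwD : cdist (u - ((r:ℝ) : S1)) u' ≤ D) :
    0 < D - cdist (u - ((r:ℝ) : S1)) u' + cdist (v - ((r:ℝ) : S1)) v' ∧
    D - cdist (u - ((r:ℝ) : S1)) u' + cdist (v - ((r:ℝ) : S1)) v' ≤ 1 ∧
    v' = u' + ((D - cdist (u - ((r:ℝ) : S1)) u' + cdist (v - ((r:ℝ) : S1)) v' : ℝ) : S1) ∧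
    ∀ z ∈ X, (cdist u (f z) < D ↔
      cdist u' z < D - cdist (u - ((r:ℝ) : S1)) u' + cdist (v - ((r:ℝ) : S1)) v') := by
  set a : S1 := u - ((r:ℝ) : S1) with ha
  set b : S1 := v - ((r:ℝ) : S1) with hb
  set w : ℝ := cdist a u' with hwdef
  set z' : ℝ := cdist b v' with hz'def
  have hw0 : 0 < w := hu'.2.1
  have hw1 : w < 1 := cdist_lt_one a u'
  have hz'0 : 0 < z' := hv'.2.1
  have hz'1 : z' < 1 := cdist_lt_one b v'
  have hu'a : u' = a + ((w : ℝ) : S1) := cdist_shift a u'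
  have hv'b : v' = b + ((z' : ℝ) : S1) := cdist_shift b v'
  have hba : b = a + ((D : ℝ) : S1) := by
    rw [hb, ha, hvu]; abel
  refine ⟨by linarith, ?_, ?_, ?_⟩
  · -- D' ≤ 1
    rcases eq_or_lt_of_le hwD with hweq | hwlt
    · linarith
    · have hbu' : cdist b u' = w - D + 1 := by
        refine cdist_eq' ?_ (by linarith) (by linarith)
        rw [hu'a, hba]; simp only [ccoe_add, ccoe_sub, ccoe_one]; abel
      have := hv'.2.2 u' hu'.1 (by rw [hbu']; linarith)
      rw [hbu'] at this; linarith
  · -- position of v'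
    rw [hv'b, hba, hu'a]; simp only [ccoe_add, ccoe_sub, ccoe_one]; abel
  · -- the transfer equivalence
    intro z hz
    have hfzX := (hf z hz).1
    constructor
    · -- forward: preimage point is in the new arc
      intro hψ
      set σ : ℝ := cdist a z with hσdef
      have hσ1 : σ < 1 := cdist_lt_one a z
      have hσ0 : 0 ≤ σ := cdist_nonneg a z
      have hza : z = a + ((σ : ℝ) : S1) := cdist_shift a z
      rcases eq_or_lt_of_le hσ0 with hσz | hσpos
      · -- z = a : forces D = 1
        rcases lt_or_ge D 1 with hD1' | hD1'
        · exact absurd (at_a_arc hr0 hr1 hf hu hv (le_of_lt hD0) hD1' hvu hz hσz.symm)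
            (not_le.2 hψ)
        · have hDeq : D = 1 := le_antisymm hD1 hD1'
          have hzaeq : z = a := (eq_of_cdist_eq_zero hσz.symm).symm
          have : cdist u' z = 1 - w := by
            refine cdist_eq' ?_ (by linarith) (by linarith)
            rw [hzaeq, hu'a]; simp only [ccoe_add, ccoe_sub, ccoe_one]; abel
          rw [this]; linarith
      · rcases le_or_gt σ D with hσD | hσD
        · -- main case
          have hwσ := hu'.2.2 z hz hσpos
          have : cdist u' z = σ - w := by
            refine cdist_eq' ?_ (by linarith) (by linarith)
            rw [hza, hu'a]; simp only [ccoe_add, ccoe_sub, ccoe_one]; abel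
          rw [this]; linarith
        · exact absurd (beyond_arc hr0 hr1 hf hu hv (le_of_lt hD0) hD1 hvu hz hσD)
            (not_le.2 hψ)
    · -- backward: new arc point maps into the old arc
      intro hc
      set c : ℝ := cdist u' z with hcdef
      have hc0 : 0 ≤ c := cdist_nonneg u' z
      have hc1 : c < 1 := cdist_lt_one u' z
      have hzu' : z = u' + ((c : ℝ) : S1) := cdist_shift u' z
      -- step 1 : c ≤ D - w
      have hcle : c ≤ D - w := by
        by_contra hlt
        push_neg at hlt
        have hbz : cdist b z = w + c - D := by
          refine cdist_eq' ?_ (by linarith) (by linarith)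
          rw [hzu', hu'a, hba]; simp only [ccoe_add, ccoe_sub, ccoe_one]; abel
        have := hv'.2.2 z hz (by rw [hbz]; linarith)
        rw [hbz] at this; linarith
      rcases lt_or_ge (w + c) 1 with hwc | hwc
      · have hσeq : cdist a z = w + c := by
          refine cdist_eq' ?_ (by linarith) (by linarith)
          rw [hzu', hu'a]; simp only [ccoe_add, ccoe_sub, ccoe_one]; abel
        have := forward_arc hr1 hf hu hz (by rw [hσeq]; linarith)
        rw [hσeq] at this; linarith
      · -- w + c = 1, D = 1 : trivial since cdist < 1
        have := cdist_lt_one u (f z)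
        linarith

/-- The death step: if the nearest point `u'` after `a = u - r` is beyond the translated
arc, the preimage becomes empty, `u' = v'`, and the distances satisfy `w = D + z'`. -/
lemma step_death (hr0 : 0 < r) (hr1 : r ≤ 1) (hf : IsCyclicMap X r f)
    (hu : u ∈ X) (hv : v ∈ X) (hD0 : 0 < D) (hD1 : D ≤ 1)
    (hvu : v = u + ((D:ℝ) : S1))
    (hu' : NearestCWAfter X (u - ((r:ℝ) : S1)) u')
    (hv' : NearestCWAfter X (v - ((r:ℝ) : S1)) v')
    (hwD : D < cdist (u - ((r:ℝ) : S1)) u') :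
    cdist (u - ((r:ℝ) : S1)) u' = D + cdist (v - ((r:ℝ) : S1)) v' ∧
    u' = v' ∧
    ∀ z ∈ X, D ≤ cdist u (f z) := by
  set a : S1 := u - ((r:ℝ) : S1) with ha
  set b : S1 := v - ((r:ℝ) : S1) with hb
  set w : ℝ := cdist a u' with hwdef
  set z' : ℝ := cdist b v' with hz'def
  have hw0 : 0 < w := hu'.2.1
  have hw1 : w < 1 := cdist_lt_one a u'
  have hz'0 : 0 < z' := hv'.2.1
  have hu'a : u' = a + ((w : ℝ) : S1) := cdist_shift a u'
  have hv'b : v' = b + ((z' : ℝ) : S1) := cdist_shift b v'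
  have hba : b = a + ((D : ℝ) : S1) := by
    rw [hb, ha, hvu]; abel
  have hD1' : D < 1 := lt_of_lt_of_le hwD (le_of_lt hw1)
  -- z' ≤ w - D
  have hbu' : cdist b u' = w - D := by
    refine cdist_eq' ?_ (by linarith) (by linarith)
    rw [hu'a, hba]; simp only [ccoe_add, ccoe_sub, ccoe_one]; abel
  have hz'le : z' ≤ w - D := by
    have := hv'.2.2 u' hu'.1 (by rw [hbu']; linarith)
    rw [hbu'] at this; exact this
  -- w ≤ D + z'
  have hav' : cdist a v' = D + z' := by
    refine cdist_eq' ?_ (by linarith) (by linarith)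
    rw [hv'b, hba]; simp only [ccoe_add, ccoe_sub, ccoe_one]; abel
  have hwle : w ≤ D + z' := by
    have := hu'.2.2 v' hv'.1 (by rw [hav']; linarith)
    rw [hav'] at this; exact this
  have hweq : w = D + z' := le_antisymm hwle (by linarith)
  refine ⟨hweq, ?_, ?_⟩
  · rw [hu'a, hv'b, hba, hweq]; simp only [ccoe_add, ccoe_sub, ccoe_one]; abel
  · intro z hz
    rcases eq_or_lt_of_le (cdist_nonneg a z) with hσz | hσpos
    · exact at_a_arc hr0 hr1 hf hu hv (le_of_lt hD0) hD1' hvu hz hσz.symm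
    · have hwσ := hu'.2.2 z hz hσpos
      exact beyond_arc hr0 hr1 hf hu hv (le_of_lt hD0) hD1 hvu hz (by linarith)

end step

/-- With the sequences `x j, y j` as before, set `z₁ = d⃗(x₀, y₀)`, and for `j ≥ 1`,
`w_j = d⃗(x_{j-1} − r, x_j)` and `z_{j+1} = d⃗(y_{j-1} − r, y_j)`. Then for every `i ≥ 0`,
`x₀ ∈ f_r^i(X)` if and only if `Σ_{j=1}^i w_j ≤ Σ_{j=1}^i z_j`. -/
theorem mem_image_iff_gap_sums
    (X : Finset (AddCircle (1:ℝ))) (r : ℝ) (hr0 : 0 < r) (hr1 : r ≤ 1)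
    (f : AddCircle (1:ℝ) → AddCircle (1:ℝ)) (hf : IsCyclicMap X r f)
    (x₀ : AddCircle (1:ℝ)) (hx₀ : x₀ ∈ X)
    (x y : ℕ → AddCircle (1:ℝ))
    (hx0 : x 0 = x₀)
    (hy0 : NearestCWAfter X x₀ (y 0))
    (hxj : ∀ j, NearestCWAfter X (x j - ((r : ℝ) : AddCircle (1:ℝ))) (x (j+1)))
    (hyj : ∀ j, NearestCWAfter X (y j - ((r : ℝ) : AddCircle (1:ℝ))) (y (j+1)))
    (zs ws : ℕ → ℝ)
    (hz1 : zs 1 = cdist x₀ (y 0))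
    (hzs : ∀ j, zs (j + 2) = cdist (y j - ((r : ℝ) : AddCircle (1:ℝ))) (y (j+1)))
    (hws : ∀ j, ws (j + 1) = cdist (x j - ((r : ℝ) : AddCircle (1:ℝ))) (x (j+1)))
    (i : ℕ) :
    (∃ z ∈ X, f^[i] z = x₀) ↔
      ∑ j ∈ Finset.Icc 1 i, ws j ≤ ∑ j ∈ Finset.Icc 1 i, zs j := by
  have hxmem : ∀ j, x j ∈ X := by
    intro j
    cases j with
    | zero => rw [hx0]; exact hx₀
    | succ n => exact (hxj n).1
  have hymem : ∀ j, y j ∈ X := by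
    intro j
    cases j with
    | zero => exact hy0.1
    | succ n => exact (hyj n).1
  have hzpos : ∀ j, 0 < zs (j + 1) := by
    intro j
    cases j with
    | zero => rw [hz1]; exact hy0.2.1
    | succ n => rw [hzs n]; exact (hyj n).2.1
  set W : ℕ → ℝ := fun k => ∑ j ∈ Finset.Icc 1 k, ws j with hW
  set Z : ℕ → ℝ := fun k => ∑ j ∈ Finset.Icc 1 k, zs j with hZ
  have hWs : ∀ k, W (k + 1) = W k + ws (k + 1) := by
    intro k
    simp only [hW]
    rw [Finset.sum_Icc_succ_top (by omega)]
  have hZs : ∀ k, Z (k + 1) = Z k + zs (k + 1) := by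
    intro k
    simp only [hZ]
    rw [Finset.sum_Icc_succ_top (by omega)]
  have main : ∀ k,
      (0 < Z k + zs (k+1) - W k ∧ Z k + zs (k+1) - W k ≤ 1 ∧ W k ≤ Z k ∧
        y k = x k + ((Z k + zs (k+1) - W k : ℝ) : AddCircle (1:ℝ)) ∧
        ∀ z ∈ X, (f^[k] z = x₀ ↔ cdist (x k) z < Z k + zs (k+1) - W k))
      ∨ (x k = y k ∧ Z k + zs (k+1) - W k = 0 ∧ Z k < W k ∧
        ∀ z ∈ X, f^[k] z ≠ x₀) := by
    intro k
    induction k with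
    | zero =>
      left
      have hW0 : W 0 = 0 := by simp [hW]
      have hZ0 : Z 0 = 0 := by simp [hZ]
      have hD0 : 0 < Z 0 + zs 1 - W 0 := by rw [hW0, hZ0]; simpa using hzpos 0
      have hD1 : Z 0 + zs 1 - W 0 ≤ 1 := by
        rw [hW0, hZ0, hz1]
        have := cdist_lt_one x₀ (y 0)
        linarith
      refine ⟨hD0, hD1, by rw [hW0, hZ0], ?_, ?_⟩
      · rw [hx0, hW0, hZ0]
        have : (0:ℝ) + zs 1 - 0 = zs 1 := by ring
        rw [this, hz1]
        exact cdist_shift x₀ (y 0)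
      · intro z hz
        rw [Function.iterate_zero_apply, hx0]
        constructor
        · intro h
          rw [h, cdist_self]
          exact hD0
        · intro h
          by_contra hne
          have hpos : 0 < cdist x₀ z := by
            rcases eq_or_lt_of_le (cdist_nonneg x₀ z) with h0 | h0
            · exact absurd (eq_of_cdist_eq_zero h0.symm).symm hne
            · exact h0
          have := hy0.2.2 z hz hpos
          rw [hW0, hZ0, hz1] at h
          linarith
    | succ n ih =>
      have hDrec : Z (n+1) + zs (n+2) - W (n+1)
          = (Z n + zs (n+1) - W n) + zs (n+2) - ws (n+1) := by
        rw [hWs, hZs]; ring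
      rcases ih with ⟨hD0, hD1, hWZ, hyx, hchar⟩ | ⟨hxy, hDz, hZW, hdead⟩
      · -- alive at n
        set D : ℝ := Z n + zs (n+1) - W n with hDdef
        by_cases hcase : cdist (x n - ((r:ℝ) : AddCircle (1:ℝ))) (x (n+1)) ≤ D
        · -- stays alive
          obtain ⟨hA0, hA1, hA2, hA3⟩ := step_alive hr0 hr1 hf (hxmem n) (hymem n)
            hD0 hD1 hyx (hxj n) (hyj n) hcase
          have hDnew : Z (n+1) + zs (n+2) - W (n+1)
              = D - cdist (x n - ((r:ℝ) : AddCircle (1:ℝ))) (x (n+1))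
                + cdist (y n - ((r:ℝ) : AddCircle (1:ℝ))) (y (n+1)) := by
            rw [hDrec, hws n, hzs n]; ring
          left
          refine ⟨by rw [hDnew]; exact hA0, by rw [hDnew]; exact hA1, ?_, ?_, ?_⟩
          · rw [hWs, hZs]
            have hwD : ws (n+1) ≤ D := by rw [hws n]; exact hcase
            rw [hDdef] at hwD
            have := hzpos n
            linarith
          · rw [hDnew]; exact hA2
          · intro z hz
            rw [Function.iterate_succ_apply, hDnew]
            have h1 := hchar (f z) (hf z hz).1
            rw [h1]
            exact hA3 z hz
        · -- dies
          push_neg at hcase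
          obtain ⟨hB1, hB2, hB3⟩ := step_death hr0 hr1 hf (hxmem n) (hymem n)
            hD0 hD1 hyx (hxj n) (hyj n) hcase
          right
          have hDznew : Z (n+1) + zs (n+2) - W (n+1) = 0 := by
            rw [hDrec, hws n, hzs n]
            rw [hB1]
            ring
          refine ⟨hB2, hDznew, ?_, ?_⟩
          · have h := hDznew
            rw [hZs] at h ⊢
            rw [hWs] at h ⊢
            have := hzpos (n+1)
            linarith
          · intro z hz hcontra
            rw [Function.iterate_succ_apply] at hcontra
            have h1 := (hchar (f z) (hf z hz).1).1 hcontra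
            exact absurd h1 (not_lt.2 (hB3 z hz))
      · -- dead at n
        right
        have hxy1 : x (n+1) = y (n+1) := by
          have h1 := hxj n
          have h2 := hyj n
          rw [← hxy] at h2
          exact nearest_unique h1 h2
        have hwz : ws (n+1) = zs (n+2) := by
          rw [hws n, hzs n, hxy, hxy1]
        have hDznew : Z (n+1) + zs (n+2) - W (n+1) = 0 := by
          rw [hDrec, hwz, hDz]; ring
        refine ⟨hxy1, hDznew, ?_, ?_⟩
        · rw [hZs] at hDznew ⊢
          rw [hWs] at hDznew ⊢
          have := hzpos (n+1)
          linarith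
        · intro z hz hcontra
          rw [Function.iterate_succ_apply] at hcontra
          exact hdead (f z) (hf z hz).1 hcontra
  rcases main i with ⟨hD0, hD1, hWZ, hyx, hchar⟩ | ⟨hxy, hDz, hZW, hdead⟩
  · constructor
    · intro _; exact hWZ
    · intro _
      refine ⟨x i, hxmem i, (hchar (x i) (hxmem i)).2 ?_⟩
      rw [cdist_self]
      exact hD0
  · constructor
    · rintro ⟨z, hz, hzeq⟩
      exact absurd hzeq (hdead z hz)
    · intro h
      exact absurd h (not_le.2 hZW)
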